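/- Let V be a real normed vector space and let E and G′ be subspaces of V that are algebraically complementary, i.e. every v ∈ V has a unique decomposition v = u + w with u ∈ E and w ∈ G′. Let λ ∈ (0,1) and c > 0, and for each n ∈ ℕ let T_n : V → V be a linear map such that ‖T_n u‖ ≥ λ^{−n}·‖u‖ for every u ∈ E and ‖T_n w‖ ≤ e^{−cn/2}·‖w‖ for every w ∈ G′. If G is a subspace of V such that ‖T_n v‖ ≤ e^{−cn/2}·‖v‖ for every v ∈ G and every n ∈ ℕ, then G ⊆ G′. -/

import Mathlib

/-- Uniqueness of the backward-contracted subspace: if `E` and `G'` are complementary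
subspaces of a normed space `V`, each `T n` expands `E` at rate `λ^{-n}` and contracts
`G'` at rate `e^{-cn/2}`, then any subspace `G` contracted by every `T n` at rate
`e^{-cn/2}` must be contained in `G'`. -/
theorem contracted_subspace_unique
    {V : Type*} [NormedAddCommGroup V] [NormedSpace ℝ V]
    (E G' G : Submodule ℝ V) (hcompl : IsCompl E G')
    (lam c : ℝ) (hlam : lam ∈ Set.Ioo (0 : ℝ) 1) (hc : 0 < c)
    (T : ℕ → V →ₗ[ℝ] V)
    (hE : ∀ n : ℕ, ∀ u ∈ E, (lam ^ n)⁻¹ * ‖u‖ ≤ ‖T n u‖)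
    (hG' : ∀ n : ℕ, ∀ w ∈ G', ‖T n w‖ ≤ Real.exp (-c * n / 2) * ‖w‖)
    (hG : ∀ n : ℕ, ∀ v ∈ G, ‖T n v‖ ≤ Real.exp (-c * n / 2) * ‖v‖) :
    G ≤ G' := by
  intro v hv
  have hvtop : v ∈ E ⊔ G' := by rw [hcompl.sup_eq_top]; exact Submodule.mem_top
  obtain ⟨u, hu, w, hw, huw⟩ := Submodule.mem_sup.mp hvtop
  have hu0 : u = 0 := by
    by_contra h
    have hupos : 0 < ‖u‖ := norm_pos_iff.mpr h
    have key : ∀ n : ℕ, ‖u‖ ≤ Real.exp (-c * n / 2) * (‖v‖ + ‖w‖) := by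
      intro n
      have h1 : (lam ^ n)⁻¹ * ‖u‖ ≤ ‖T n u‖ := hE n u hu
      have h2 : ‖T n u‖ ≤ ‖T n v‖ + ‖T n w‖ := by
        have huvw : u = v - w := by rw [← huw]; abel
        rw [huvw, map_sub]
        exact norm_sub_le _ _
      have h3 := hG n v hv
      have h4 := hG' n w hw
      have hlam1 : (1:ℝ) ≤ (lam ^ n)⁻¹ := by
        rw [one_le_inv_iff₀]
        exact ⟨pow_pos hlam.1 n, pow_le_one₀ hlam.1.le hlam.2.le⟩
      have h5 : ‖u‖ ≤ (lam ^ n)⁻¹ * ‖u‖ := le_mul_of_one_le_left (norm_nonneg u) hlam1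
      calc ‖u‖ ≤ ‖T n u‖ := h5.trans h1
        _ ≤ ‖T n v‖ + ‖T n w‖ := h2
        _ ≤ Real.exp (-c * n / 2) * ‖v‖ + Real.exp (-c * n / 2) * ‖w‖ := add_le_add h3 h4
        _ = Real.exp (-c * n / 2) * (‖v‖ + ‖w‖) := by ring
    have hlim : Filter.Tendsto (fun n : ℕ => Real.exp (-c * n / 2) * (‖v‖ + ‖w‖))
        Filter.atTop (nhds 0) := by
      have heq : (fun n : ℕ => Real.exp (-c * n / 2) * (‖v‖ + ‖w‖))
          = fun n : ℕ => (Real.exp (-c / 2)) ^ n * (‖v‖ + ‖w‖) := by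
        funext n
        rw [← Real.exp_nat_mul]
        ring_nf
      rw [heq]
      have hbase : |Real.exp (-c / 2)| < 1 := by
        rw [abs_of_pos (Real.exp_pos _)]
        rw [Real.exp_lt_one_iff]
        linarith
      simpa using (tendsto_pow_atTop_nhds_zero_of_abs_lt_one hbase).mul_const (‖v‖ + ‖w‖)
    have := ge_of_tendsto' hlim key
    linarith
  rw [← huw, hu0, zero_add]
  exact hw
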